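/- The generating function Q(X,Y) = ∑_{j≥0} q_j(X) Y^j of the sequence defined by q_0(X)=0 and q_{j+1}(X) = (X+1)^{2j+1} − X^j − q_j(X) − q_j(X) X^{-1} equals X·Y / ((1 − X·Y)(1 − (X+1)²·Y)) as a formal power series in Y. -/

import Mathlib

open LaurentPolynomial

theorem laurent_recursion_generating_function
    (q : ℕ → LaurentPolynomial ℚ) (h0 : q 0 = 0)
    (hrec : ∀ j : ℕ, q (j + 1) =
      (T 1 + 1) ^ (2 * j + 1) - (T 1) ^ j - q j - q j * T (-1)) :
    PowerSeries.mk q *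
        ((1 - PowerSeries.C (R := LaurentPolynomial ℚ) (T 1) * PowerSeries.X) *
          (1 - PowerSeries.C (R := LaurentPolynomial ℚ) ((T 1 + 1) ^ 2) * PowerSeries.X))
      = PowerSeries.C (R := LaurentPolynomial ℚ) (T 1) * PowerSeries.X := by
  have key : ∀ j, ((T 1:LaurentPolynomial ℚ)^2 + T 1 + 1) * q j
      = T 1 * ((T 1 + 1) ^ (2*j) - (T 1)^j) := by
    intro j
    induction j with
    | zero => simp [h0]
    | succ n ih =>
      have hT : (T 1 : LaurentPolynomial ℚ) * T (-1) = 1 := by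
        rw [← T_add]; norm_num
      rw [hrec n]
      linear_combination (-1 - T (-1)) * ih - ((T 1 + 1) ^ (2*n) - (T 1)^n) * hT
  have hc : ((T 1:LaurentPolynomial ℚ)^2 + T 1 + 1) ≠ 0 := by
    intro h
    have h1 : Polynomial.toLaurent (Polynomial.X^2 + Polynomial.X + 1 : Polynomial ℚ)
        = Polynomial.toLaurent (0 : Polynomial ℚ) := by simpa using h
    have h2 := leftInverse_trunc_toLaurent.injective h1
    have := congrArg (Polynomial.eval 0) h2
    simp at this
  have hq1 : q 1 = T 1 := by
    have := hrec 0
    simp [h0] at this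
    simpa using this
  have rec2 : ∀ j, q (j+2) = (T 1 + (T 1 + 1)^2) * q (j+1) - T 1 * (T 1 + 1)^2 * q j := by
    intro j
    apply mul_left_cancel₀ hc
    linear_combination key (j+2) - (T 1 + (T 1 + 1)^2) * key (j+1) + (T 1 * (T 1 + 1)^2) * key j
  set a : LaurentPolynomial ℚ := T 1 with ha
  set b : LaurentPolynomial ℚ := (T 1 + 1)^2 with hb
  have expand : PowerSeries.mk q *
        ((1 - PowerSeries.C (R := LaurentPolynomial ℚ) a * PowerSeries.X) *
          (1 - PowerSeries.C (R := LaurentPolynomial ℚ) b * PowerSeries.X))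
      = PowerSeries.mk q
        - PowerSeries.C (R := LaurentPolynomial ℚ) a * (PowerSeries.mk q * PowerSeries.X)
        - PowerSeries.C (R := LaurentPolynomial ℚ) b * (PowerSeries.mk q * PowerSeries.X)
        + PowerSeries.C (R := LaurentPolynomial ℚ) a *
            (PowerSeries.C (R := LaurentPolynomial ℚ) b *
              ((PowerSeries.mk q * PowerSeries.X) * PowerSeries.X)) := by
    ring
  rw [expand]
  refine PowerSeries.ext fun n => ?_
  match n with
  | 0 => simp [h0, PowerSeries.coeff_zero_mul_X]
  | 1 => simp [PowerSeries.coeff_C_mul, PowerSeries.coeff_succ_mul_X,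
      PowerSeries.coeff_zero_mul_X, PowerSeries.coeff_X, h0, hq1]
  | (n+2) =>
    simp [PowerSeries.coeff_C_mul, PowerSeries.coeff_succ_mul_X, PowerSeries.coeff_X,
      PowerSeries.coeff_mk]
    rw [rec2 n]
    ring
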